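/- Let X₁, …, Xₙ be i.i.d. real-valued random variables with common distribution D having CDF F, let α ∈ (0,1), β ∈ (0,1), and t > 0 be such that F(q_α + t) > α, where q_α := inf{x : F(x) ≥ α}. Define the empirical quantile q̂_α := inf{x : #{i : Xᵢ ≤ x} ≥ α·n}. If n ≥ (1/(2·(F(q_α + t) − α)²))·log(1/β), then Pr( q̂_α > q_α + t ) ≤ β. -/

import Mathlib

open MeasureTheory ProbabilityTheory

/-- The CDF of a distribution `D` on `ℝ`. -/
noncomputable def distCdf (D : Measure ℝ) (x : ℝ) : ℝ := (D (Set.Iic x)).toReal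

/-- The population `τ`-quantile `q_τ := inf {x : F(x) ≥ τ}`. -/
noncomputable def popQuantile (D : Measure ℝ) (τ : ℝ) : ℝ :=
  sInf {x : ℝ | τ ≤ distCdf D x}

/-- The empirical `γ`-quantile `q̂_γ := inf {x : #{i : Xᵢ ≤ x} ≥ γ·n}`. -/
noncomputable def empQuantile {n : ℕ} (X : Fin n → ℝ) (γ : ℝ) : ℝ :=
  sInf {x : ℝ | γ * (n : ℝ) ≤ ((Finset.univ.filter (fun i => X i ≤ x)).card : ℝ)}

section Aux

open Real

/-- Hoeffding's lemma, Bernoulli case. -/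
lemma bern_mgf_bound (p s : ℝ) (hp0 : 0 ≤ p) (hp1 : p ≤ 1) (hs : 0 ≤ s) :
    p * exp (s * (p - 1)) + (1 - p) * exp (s * p) ≤ exp (s ^ 2 / 8) := by
  set den : ℝ → ℝ := fun s => 1 - p + p * exp (-s) with hden_def
  have hden : ∀ x : ℝ, 0 < den x := by
    intro x
    rcases eq_or_lt_of_le hp1 with h | h
    · simp only [hden_def]
      rw [h]
      norm_num
      positivity
    · have : 0 < 1 - p := by linarith
      have : 0 ≤ p * exp (-x) := by positivity
      simp only [hden_def]; linarith
  set g : ℝ → ℝ := fun s => s ^ 2 / 8 - (s * p + Real.log (den s)) with hg_def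
  set g' : ℝ → ℝ := fun s => s / 4 - p + p * exp (-s) / den s with hg'_def
  have hdenD : ∀ x : ℝ, HasDerivAt den (-(p * exp (-x))) x := by
    intro x
    have h1 : HasDerivAt (fun y : ℝ => exp (-y)) (-exp (-x)) x := by
      exact ((Real.hasDerivAt_exp (-x)).comp x (hasDerivAt_neg x)).congr_deriv (by ring)
    have := (h1.const_mul p).const_add (1 - p)
    simpa [hden_def, mul_comm] using this
  have hgD : ∀ x : ℝ, HasDerivAt g (g' x) x := by
    intro x
    have hlog : HasDerivAt (fun y => Real.log (den y)) (-(p * exp (-x)) / den x) x :=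
      (hdenD x).log (hden x).ne'
    have h1 : HasDerivAt (fun y : ℝ => y ^ 2 / 8) (x / 4) x := by
      have := (hasDerivAt_pow 2 x).div_const 8
      simpa using this.congr_deriv (by ring)
    have h2 : HasDerivAt (fun y : ℝ => y * p) p x := by
      simpa using (hasDerivAt_id x).mul_const p
    have := h1.sub (h2.add hlog)
    refine this.congr_deriv ?_
    simp only [hg'_def]
    ring
  have hg'D : ∀ x : ℝ, HasDerivAt g' (1 / 4 - (p * exp (-x)) * (1 - p) / (den x) ^ 2) x := by
    intro x
    have hw : HasDerivAt (fun y : ℝ => p * exp (-y)) (-(p * exp (-x))) x := by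
      have h1 : HasDerivAt (fun y : ℝ => exp (-y)) (-exp (-x)) x := by
        exact ((Real.hasDerivAt_exp (-x)).comp x (hasDerivAt_neg x)).congr_deriv (by ring)
      simpa [mul_comm] using h1.const_mul p
    have hq : HasDerivAt (fun y : ℝ => p * exp (-y) / den y)
        ((-(p * exp (-x)) * den x - p * exp (-x) * (-(p * exp (-x)))) / (den x) ^ 2) x :=
      hw.div (hdenD x) (hden x).ne'
    have h1 : HasDerivAt (fun y : ℝ => y / 4 - p) (1 / 4) x := by
      simpa using ((hasDerivAt_id x).div_const 4).sub_const p
    have := h1.add hq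
    refine this.congr_deriv ?_
    have hd := (hden x).ne'
    field_simp [hden_def]
    ring
  have hg''_nonneg : ∀ x : ℝ, 0 ≤ 1 / 4 - (p * exp (-x)) * (1 - p) / (den x) ^ 2 := by
    intro x
    rw [sub_nonneg, div_le_iff₀ (pow_pos (hden x) 2)]
    simp only [hden_def]
    nlinarith [sq_nonneg ((1 - p) - p * exp (-x))]
  have hg'mono : Monotone g' := by
    apply monotone_of_deriv_nonneg
    · intro x; exact (hg'D x).differentiableAt
    · intro x; rw [(hg'D x).deriv]; exact hg''_nonneg x
  have hg'0 : g' 0 = 0 := by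
    simp only [hg'_def, hden_def]
    simp
  have hg'nonneg : ∀ x : ℝ, 0 ≤ x → 0 ≤ g' x := by
    intro x hx
    have := hg'mono hx
    rw [hg'0] at this
    exact this
  have hgmono : MonotoneOn g (Set.Ici 0) := by
    apply monotoneOn_of_deriv_nonneg (convex_Ici 0)
    · exact fun x _ => (hgD x).differentiableAt.continuousAt.continuousWithinAt
    · intro x _; exact (hgD x).differentiableAt.differentiableWithinAt
    · intro x hx
      rw [(hgD x).deriv]
      exact hg'nonneg x (le_of_lt (by simpa using hx))
  have hg0 : g 0 = 0 := by simp [hg_def, hden_def]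
  have hgs : 0 ≤ g s := by
    have := hgmono (Set.self_mem_Ici) (Set.mem_Ici.mpr hs) hs
    rw [hg0] at this; exact this
  have hlog_le : s * p + Real.log (den s) ≤ s ^ 2 / 8 := by
    simp only [hg_def] at hgs; linarith
  have := Real.exp_le_exp.mpr hlog_le
  rw [Real.exp_add, Real.exp_log (hden s)] at this
  calc p * exp (s * (p - 1)) + (1 - p) * exp (s * p)
      = exp (s * p) * den s := by
        simp only [hden_def]
        rw [show s * (p - 1) = s * p + (-s) by ring, Real.exp_add]
        ring
    _ ≤ exp (s ^ 2 / 8) := this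

open scoped Classical in
lemma integrable_ite_const {Ω : Type*} [MeasurableSpace Ω] (μ : Measure Ω)
    [IsFiniteMeasure μ] {A : Set Ω} (hA : MeasurableSet A) (c1 c2 : ℝ) :
    Integrable (fun ω => if ω ∈ A then c1 else c2) μ := by
  have h : (fun ω => if ω ∈ A then c1 else c2)
      = fun ω => Set.indicator A (fun _ => c1 - c2) ω + c2 := by
    funext ω; by_cases h : ω ∈ A <;> simp [h]
  rw [h]
  exact ((integrable_const (c1 - c2)).indicator hA).add (integrable_const c2)

open scoped Classical in
lemma integral_ite_const {Ω : Type*} [MeasurableSpace Ω] (μ : Measure Ω)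
    [IsProbabilityMeasure μ] {A : Set Ω} (hA : MeasurableSet A) (c1 c2 : ℝ) :
    ∫ ω, (if ω ∈ A then c1 else c2) ∂μ
      = c1 * (μ A).toReal + c2 * (1 - (μ A).toReal) := by
  have h : (fun ω => if ω ∈ A then c1 else c2)
      = fun ω => Set.indicator A (fun _ => c1 - c2) ω + c2 := by
    funext ω; by_cases h : ω ∈ A <;> simp [h]
  rw [h, integral_add ((integrable_const (c1 - c2)).indicator hA) (integrable_const c2),
    integral_indicator_const _ hA, integral_const]
  simp [smul_eq_mul]
  simp only [Measure.real]
  ring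

end Aux

/-- For i.i.d. samples from `D` with CDF `F`, if `F(q_α + t) > α`
and `n ≥ (1/(2(F(q_α+t) − α)²))·log(1/β)`, then the empirical `α`-quantile
exceeds `q_α + t` with probability at most `β`. -/
theorem empirical_quantile_upper_additive
    {Ω : Type*} [MeasurableSpace Ω] (μ : Measure Ω) [IsProbabilityMeasure μ]
    (n : ℕ) (X : Fin n → Ω → ℝ) (hmeas : ∀ i, Measurable (X i))
    (D : Measure ℝ) [IsProbabilityMeasure D]
    (hindep : iIndepFun X μ)
    (hid : ∀ i, Measure.map (X i) μ = D)
    (α β t : ℝ) (hα : α ∈ Set.Ioo (0 : ℝ) 1) (hβ : β ∈ Set.Ioo (0 : ℝ) 1)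
    (ht : 0 < t) (hF : α < distCdf D (popQuantile D α + t))
    (hn : (n : ℝ) ≥ (1 / (2 * (distCdf D (popQuantile D α + t) - α) ^ 2))
            * Real.log (1 / β)) :
    μ {ω | popQuantile D α + t < empQuantile (fun i => X i ω) α}
      ≤ ENNReal.ofReal β := by
  obtain ⟨hα0, hα1⟩ := hα
  obtain ⟨hβ0, hβ1⟩ := hβ
  set q : ℝ := popQuantile D α + t with hq_def
  set p : ℝ := distCdf D q with hp_def
  set ε : ℝ := p - α with hε_def
  have hε : 0 < ε := by simp only [hε_def]; linarith
  have hp0 : 0 ≤ p := ENNReal.toReal_nonneg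
  have hp1 : p ≤ 1 := by
    have h := ENNReal.toReal_mono (measure_ne_top D Set.univ)
      (measure_mono (Set.subset_univ (Set.Iic q)))
    simpa [distCdf, hp_def] using h
  have hlogβ : 0 < Real.log (1 / β) :=
    Real.log_pos (by rw [lt_div_iff₀ hβ0]; linarith)
  have hnpos : 0 < n := by
    rcases Nat.eq_zero_or_pos n with h | h
    · exfalso
      rw [h] at hn
      have : (0 : ℝ) < 1 / (2 * ε ^ 2) * Real.log (1 / β) := by positivity
      simp only [Nat.cast_zero] at hn
      linarith
    · exact h
  have h2ε : (0 : ℝ) < 2 * ε ^ 2 := by positivity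
  have h2n : Real.log (1 / β) ≤ 2 * (n : ℝ) * ε ^ 2 := by
    have hn' : Real.log (1 / β) / (2 * ε ^ 2) ≤ (n : ℝ) := by
      rw [ge_iff_le, one_div, inv_mul_eq_div] at hn
      exact hn
    have := (div_le_iff₀ h2ε).mp hn'
    calc Real.log (1 / β) ≤ (n : ℝ) * (2 * ε ^ 2) := this
      _ = 2 * (n : ℝ) * ε ^ 2 := by ring
  -- the Bernoulli-type variables
  set φ : ℝ → ℝ := fun x => p - (if x ≤ q then (1 : ℝ) else 0) with hφ_def
  have hφmeas : Measurable φ := by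
    apply measurable_const.sub
    exact Measurable.ite measurableSet_Iic measurable_const measurable_const
  set Z : Fin n → Ω → ℝ := fun i => φ ∘ X i with hZ_def
  have hZmeas : ∀ i, Measurable (Z i) := fun i => hφmeas.comp (hmeas i)
  have hZindep : iIndepFun Z μ :=
    hindep.comp (fun _ => φ) (fun _ => hφmeas)
  set A : Fin n → Set Ω := fun i => {ω | X i ω ≤ q} with hA_def
  have hA : ∀ i, MeasurableSet (A i) := fun i => measurableSet_le (hmeas i) measurable_const
  have hmuA : ∀ i, (μ (A i)).toReal = p := by
    intro i
    have h1 : μ (A i) = D (Set.Iic q) := by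
      rw [← hid i, Measure.map_apply (hmeas i) measurableSet_Iic]
      rfl
    rw [h1]
    rfl
  set s : ℝ := 4 * ε with hs_def
  have hs : 0 < s := by positivity
  have hite : ∀ i, (fun ω => Real.exp (s * Z i ω))
      = fun ω => if ω ∈ A i then Real.exp (s * (p - 1)) else Real.exp (s * p) := by
    intro i
    funext ω
    by_cases h : X i ω ≤ q
    · simp [hZ_def, hφ_def, hA_def, h, Function.comp]
    · simp [hZ_def, hφ_def, hA_def, h, Function.comp]
  have hZint : ∀ i, Integrable (fun ω => Real.exp (s * Z i ω)) μ := by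
    intro i
    rw [hite i]
    exact integrable_ite_const μ (hA i) _ _
  have hmgf : ∀ i, mgf (Z i) μ s ≤ Real.exp (s ^ 2 / 8) := by
    intro i
    unfold mgf
    rw [hite i, integral_ite_const μ (hA i), hmuA i]
    have := bern_mgf_bound p s hp0 hp1 hs.le
    linarith
  -- event inclusion
  have hsum : ∀ ω : Ω, (∑ i, Z i) ω
      = (n : ℝ) * p - ((Finset.univ.filter (fun i => X i ω ≤ q)).card : ℝ) := by
    intro ω
    rw [Finset.sum_apply]
    simp only [hZ_def, hφ_def, Function.comp]
    rw [Finset.sum_sub_distrib, Finset.sum_boole]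
    simp [mul_comm]
  have hsub : {ω | popQuantile D α + t < empQuantile (fun i => X i ω) α}
      ⊆ {ω | (n : ℝ) * ε ≤ (∑ i, Z i) ω} := by
    intro ω hω
    simp only [Set.mem_setOf_eq] at hω ⊢
    have hcount : ((Finset.univ.filter (fun i => X i ω ≤ q)).card : ℝ) < α * n := by
      by_contra hge
      push_neg at hge
      have hne : Nonempty (Fin n) := ⟨⟨0, hnpos⟩⟩
      set S : Set ℝ := {x : ℝ | α * (n : ℝ)
          ≤ ((Finset.univ.filter (fun i => X i ω ≤ x)).card : ℝ)} with hS_def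
      have hqmem : q ∈ S := hge
      have hbdd : BddBelow S := by
        refine ⟨Finset.univ.inf' Finset.univ_nonempty (fun i => X i ω), ?_⟩
        intro x hx
        have hxcard : 0 < (Finset.univ.filter (fun i => X i ω ≤ x)).card := by
          have h0 : (0 : ℝ) < α * n := by positivity
          have := lt_of_lt_of_le h0 hx
          exact_mod_cast Nat.cast_pos.mp (by exact_mod_cast this)
        obtain ⟨i, hi⟩ := Finset.card_pos.mp hxcard
        have hXix : X i ω ≤ x := (Finset.mem_filter.mp hi).2
        exact le_trans (Finset.inf'_le _ (Finset.mem_univ i)) hXix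
      have hle : empQuantile (fun i => X i ω) α ≤ q := csInf_le hbdd hqmem
      have : q < empQuantile (fun i => X i ω) α := hω
      linarith
    rw [hsum ω]
    have hnp : (n : ℝ) * ε = (n : ℝ) * p - α * n := by rw [hε_def]; ring
    linarith
  -- Chernoff bound
  have hint_sum : Integrable (fun ω => Real.exp (s * (∑ i, Z i) ω)) μ :=
    hZindep.integrable_exp_mul_sum hZmeas (fun i _ => hZint i)
  have hch := measure_ge_le_exp_mul_mgf (μ := μ) (X := ∑ i, Z i) ((n : ℝ) * ε) hs.le hint_sum
  have hmgfsum : mgf (∑ i, Z i) μ s = ∏ i, mgf (Z i) μ s := hZindep.mgf_sum hZmeas Finset.univ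
  have hprod : ∏ i, mgf (Z i) μ s ≤ Real.exp (s ^ 2 / 8) ^ n := by
    calc ∏ i, mgf (Z i) μ s ≤ ∏ _i : Fin n, Real.exp (s ^ 2 / 8) :=
        Finset.prod_le_prod (fun i _ => mgf_nonneg) (fun i _ => hmgf i)
      _ = Real.exp (s ^ 2 / 8) ^ n := by simp
  have hfinal : Real.exp (-s * ((n : ℝ) * ε)) * Real.exp (s ^ 2 / 8) ^ n ≤ β := by
    rw [← Real.exp_nat_mul, ← Real.exp_add]
    rw [show β = Real.exp (Real.log β) from (Real.exp_log hβ0).symm]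
    apply Real.exp_le_exp.mpr
    have hlb : Real.log (1 / β) = -Real.log β := by
      rw [one_div, Real.log_inv]
    have hE : -s * ((n : ℝ) * ε) + (n : ℝ) * (s ^ 2 / 8) = -(2 * (n : ℝ) * ε ^ 2) := by
      rw [hs_def]; ring
    rw [hE]
    rw [hlb] at h2n
    linarith
  have htoReal : (μ {ω | (n : ℝ) * ε ≤ (∑ i, Z i) ω}).toReal ≤ β := by
    refine le_trans hch ?_
    calc Real.exp (-s * ((n : ℝ) * ε)) * mgf (∑ i, Z i) μ s
        ≤ Real.exp (-s * ((n : ℝ) * ε)) * Real.exp (s ^ 2 / 8) ^ n := by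
          rw [hmgfsum]
          exact mul_le_mul_of_nonneg_left hprod (Real.exp_pos _).le
      _ ≤ β := hfinal
  calc μ {ω | popQuantile D α + t < empQuantile (fun i => X i ω) α}
      ≤ μ {ω | (n : ℝ) * ε ≤ (∑ i, Z i) ω} := measure_mono hsub
    _ = ENNReal.ofReal ((μ {ω | (n : ℝ) * ε ≤ (∑ i, Z i) ω}).toReal) :=
        (ENNReal.ofReal_toReal (measure_ne_top μ _)).symm
    _ ≤ ENNReal.ofReal β := ENNReal.ofReal_le_ofReal htoReal
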